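/- Let a, b ∈ [0,1] with a < b, let α ∈ (0,1), and let λ = α·δ_a + (1−α)·δ_b. If p > 1/2, then the iterates V^n λ converge in total variation to δ_a as n → ∞; if p < 1/2, then V^n λ converge in total variation to δ_b. -/

import Mathlib

open MeasureTheory Set Filter Topology ENNReal

/-- The unit interval `[0,1]` as a measurable space (with the Borel σ-algebra). -/
abbrev UnitInt : Type := ↥(Set.Icc (0:ℝ) 1)

/-- The family of measures `P(x,y,·)`: `p·δ_x + q·δ_y` if `x < y`, `δ_x` if `x = y`,
and `p·δ_y + q·δ_x` if `x > y`. -/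
noncomputable def Pker (p q : ℝ) (x y : UnitInt) : Measure UnitInt :=
  if x < y then ENNReal.ofReal p • Measure.dirac x + ENNReal.ofReal q • Measure.dirac y
  else if y < x then ENNReal.ofReal p • Measure.dirac y + ENNReal.ofReal q • Measure.dirac x
  else Measure.dirac x

/-- Total variation distance between two measures:
`sup { |μ A − ν A| : A measurable }` (computed in `ℝ≥0∞`). -/
noncomputable def tvDist {X : Type*} [MeasurableSpace X] (μ ν : Measure X) : ℝ≥0∞ :=
  ⨆ (A : Set X) (_ : MeasurableSet A), (μ A - ν A) ⊔ (ν A - μ A)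

/-- Two point mixture measure. -/
noncomputable def mixM (a b : UnitInt) (t : ℝ) : Measure UnitInt :=
  ENNReal.ofReal t • Measure.dirac a + ENNReal.ofReal (1 - t) • Measure.dirac b

/-- The one-step map on mixture coefficients. -/
noncomputable def Fc (p t : ℝ) : ℝ := t + (2*p - 1) * (t * (1 - t))

lemma mixM_apply (a b : UnitInt) (t : ℝ) (A : Set UnitInt) :
    mixM a b t A = ENNReal.ofReal t * Measure.dirac a A
      + ENNReal.ofReal (1 - t) * Measure.dirac b A := by
  simp [mixM]

lemma lintegral_mixM (a b : UnitInt) (t : ℝ) (g : UnitInt → ℝ≥0∞) :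
    ∫⁻ x, g x ∂(mixM a b t) = ENNReal.ofReal t * g a + ENNReal.ofReal (1 - t) * g b := by
  simp [mixM, lintegral_add_measure, lintegral_smul_measure, lintegral_dirac]

lemma Pker_ab (p q : ℝ) (a b : UnitInt) (hab : a < b) (A : Set UnitInt) :
    Pker p q a b A = ENNReal.ofReal p * Measure.dirac a A
      + ENNReal.ofReal q * Measure.dirac b A := by
  simp [Pker, hab]

lemma Pker_ba (p q : ℝ) (a b : UnitInt) (hab : a < b) (A : Set UnitInt) :
    Pker p q b a A = ENNReal.ofReal p * Measure.dirac a A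
      + ENNReal.ofReal q * Measure.dirac b A := by
  simp [Pker, hab, not_lt_of_gt hab]

lemma step_mix (p q : ℝ) (hp : 0 ≤ p) (hq : 0 ≤ q) (hpq : p + q = 1)
    (V : Measure UnitInt → Measure UnitInt)
    (hV : ∀ (μ : Measure UnitInt) (A : Set UnitInt), MeasurableSet A →
      V μ A = ∫⁻ x, ∫⁻ y, Pker p q x y A ∂μ ∂μ)
    (a b : UnitInt) (hab : a < b) (t : ℝ) (ht0 : 0 ≤ t) (ht1 : t ≤ 1) :
    V (mixM a b t) = mixM a b (Fc p t) := by
  have ht1' : (0:ℝ) ≤ 1 - t := by linarith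
  ext A hA
  rw [hV _ A hA]
  have h1 : ∫⁻ x, ∫⁻ y, Pker p q x y A ∂(mixM a b t) ∂(mixM a b t)
      = ENNReal.ofReal t * (ENNReal.ofReal t * Measure.dirac a A
          + ENNReal.ofReal (1 - t) * (ENNReal.ofReal p * Measure.dirac a A
            + ENNReal.ofReal q * Measure.dirac b A))
        + ENNReal.ofReal (1 - t) * (ENNReal.ofReal t * (ENNReal.ofReal p * Measure.dirac a A
            + ENNReal.ofReal q * Measure.dirac b A)
          + ENNReal.ofReal (1 - t) * Measure.dirac b A) := by
    rw [lintegral_mixM]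
    rw [lintegral_mixM, lintegral_mixM]
    rw [show Pker p q a a A = Measure.dirac a A from by simp [Pker],
      Pker_ab p q a b hab A, Pker_ba p q a b hab A,
      show Pker p q b b A = Measure.dirac b A from by simp [Pker]]
  rw [h1, mixM_apply]
  have e1 : ENNReal.ofReal (Fc p t)
      = ENNReal.ofReal t * ENNReal.ofReal t
        + ENNReal.ofReal t * (ENNReal.ofReal (1 - t) * ENNReal.ofReal p)
        + ENNReal.ofReal (1 - t) * (ENNReal.ofReal t * ENNReal.ofReal p) := by
    have h : Fc p t = t * t + t * ((1 - t) * p) + (1 - t) * (t * p) := by unfold Fc; ring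
    rw [h, ENNReal.ofReal_add (by positivity) (by positivity),
      ENNReal.ofReal_add (by positivity) (by positivity)]
    simp only [ENNReal.ofReal_mul ht0, ENNReal.ofReal_mul ht1']
  have e2 : ENNReal.ofReal (1 - Fc p t)
      = ENNReal.ofReal (1 - t) * ENNReal.ofReal (1 - t)
        + ENNReal.ofReal t * (ENNReal.ofReal (1 - t) * ENNReal.ofReal q)
        + ENNReal.ofReal (1 - t) * (ENNReal.ofReal t * ENNReal.ofReal q) := by
    have hqp : q = 1 - p := by linarith
    have h : 1 - Fc p t = (1 - t) * (1 - t) + t * ((1 - t) * q) + (1 - t) * (t * q) := by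
      unfold Fc; rw [hqp]; ring
    rw [h, ENNReal.ofReal_add (by positivity) (by positivity),
      ENNReal.ofReal_add (by positivity) (by positivity)]
    simp only [ENNReal.ofReal_mul ht0, ENNReal.ofReal_mul ht1']
  rw [e1, e2]
  ring

lemma tv_mix_dirac_a (a b : UnitInt) (t : ℝ) (ht0 : 0 ≤ t) (ht1 : t ≤ 1) :
    tvDist (mixM a b t) (Measure.dirac a) ≤ ENNReal.ofReal (1 - t) := by
  refine iSup₂_le fun A hA => ?_
  rw [mixM_apply]
  have hd : ENNReal.ofReal (1 - t) = 1 - ENNReal.ofReal t := by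
    rw [ENNReal.ofReal_sub _ ht0, ENNReal.ofReal_one]
  have hc1 : ENNReal.ofReal t ≤ 1 := by
    rw [← ENNReal.ofReal_one]; exact ENNReal.ofReal_le_ofReal ht1
  have hsum : ENNReal.ofReal t + (1 - ENNReal.ofReal t) = 1 := add_tsub_cancel_of_le hc1
  rw [Measure.dirac_apply' a hA, Measure.dirac_apply' b hA]
  by_cases ha : a ∈ A <;> by_cases hb : b ∈ A <;>
    simp [ha, hb, hd, indicator, hsum]
  exact hc1.trans le_add_self

lemma tv_mix_dirac_b (a b : UnitInt) (t : ℝ) (ht0 : 0 ≤ t) (ht1 : t ≤ 1) :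
    tvDist (mixM a b t) (Measure.dirac b) ≤ ENNReal.ofReal t := by
  refine iSup₂_le fun A hA => ?_
  rw [mixM_apply]
  have hd : ENNReal.ofReal (1 - t) = 1 - ENNReal.ofReal t := by
    rw [ENNReal.ofReal_sub _ ht0, ENNReal.ofReal_one]
  have hc1 : ENNReal.ofReal t ≤ 1 := by
    rw [← ENNReal.ofReal_one]; exact ENNReal.ofReal_le_ofReal ht1
  have hsum : ENNReal.ofReal t + (1 - ENNReal.ofReal t) = 1 := add_tsub_cancel_of_le hc1
  rw [Measure.dirac_apply' a hA, Measure.dirac_apply' b hA]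
  by_cases ha : a ∈ A <;> by_cases hb : b ∈ A <;>
    simp [ha, hb, hd, indicator, hsum]
  exact le_trans le_add_self le_self_add

/-- for λ = α·δ_a + (1−α)·δ_b with a < b and α ∈ (0,1), the iterates V^n λ
converge in total variation to δ_a if p > 1/2 and to δ_b if p < 1/2. -/
theorem iterates_two_point_tv_limit (p q : ℝ) (hp : 0 ≤ p) (hq : 0 ≤ q) (hpq : p + q = 1)
    (V : Measure UnitInt → Measure UnitInt)
    (hV : ∀ (μ : Measure UnitInt) (A : Set UnitInt), MeasurableSet A →
      V μ A = ∫⁻ x, ∫⁻ y, Pker p q x y A ∂μ ∂μ)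
    (a b : UnitInt) (hab : a < b) (α : ℝ) (hα : α ∈ Set.Ioo (0:ℝ) 1)
    (lam : Measure UnitInt)
    (hlam : lam = ENNReal.ofReal α • Measure.dirac a + ENNReal.ofReal (1 - α) • Measure.dirac b) :
    (p > 1/2 → Tendsto (fun n => tvDist (V^[n] lam) (Measure.dirac a)) atTop (𝓝 0)) ∧
    (p < 1/2 → Tendsto (fun n => tvDist (V^[n] lam) (Measure.dirac b)) atTop (𝓝 0)) := by
  obtain ⟨hα0, hα1⟩ := hα
  have hp1 : p ≤ 1 := by linarith
  set G : ℕ → ℝ := fun n => (Fc p)^[n] α with hG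
  -- iterates stay in [0,1] and V^[n] lam = mixM (G n)
  have key : ∀ n, 0 ≤ G n ∧ G n ≤ 1 ∧ V^[n] lam = mixM a b (G n) := by
    intro n
    induction n with
    | zero =>
      refine ⟨le_of_lt hα0, le_of_lt hα1, ?_⟩
      simp [hG, hlam, mixM]
    | succ n ih =>
      obtain ⟨h0, h1, hmes⟩ := ih
      have hGn : G (n+1) = Fc p (G n) := by
        simp [hG, Function.iterate_succ_apply']
      refine ⟨?_, ?_, ?_⟩
      · rw [hGn]; unfold Fc
        nlinarith [sq_nonneg (G n), mul_nonneg (mul_nonneg hp h0) (sub_nonneg.2 h1)]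
      · rw [hGn]; unfold Fc
        nlinarith [sq_nonneg (1 - G n), mul_nonneg (mul_nonneg hq h0) (sub_nonneg.2 h1)]
      · rw [Function.iterate_succ_apply', hmes,
          step_mix p q hp hq hpq V hV a b hab (G n) h0 h1, hGn]
  constructor
  · -- p > 1/2 : convergence to δ_a
    intro hphalf
    set c : ℝ := 1 - (2*p - 1) * α with hc
    have hc0 : 0 ≤ c := by nlinarith [mul_nonneg (by linarith : (0:ℝ) ≤ 1 - (2*p-1)) (le_of_lt hα0)]
    have hc1 : c < 1 := by nlinarith [mul_pos (by linarith : (0:ℝ) < 2*p - 1) hα0]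
    have bound : ∀ n, α ≤ G n ∧ 1 - G n ≤ (1 - α) * c ^ n := by
      intro n
      induction n with
      | zero => simp [hG]
      | succ n ih =>
        obtain ⟨hge, hle⟩ := ih
        obtain ⟨h0, h1, -⟩ := key n
        have hGn : G (n+1) = Fc p (G n) := by
          simp [hG, Function.iterate_succ_apply']
        have hcn : (0:ℝ) ≤ c ^ n := pow_nonneg hc0 n
        constructor
        · rw [hGn]; unfold Fc
          nlinarith [mul_nonneg h0 (sub_nonneg.2 h1), mul_nonneg (mul_nonneg (by linarith : (0:ℝ) ≤ 2*p-1) h0) (sub_nonneg.2 h1)]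
        · rw [hGn]
          have h2 : 1 - Fc p (G n) = (1 - G n) * (1 - (2*p - 1) * G n) := by
            unfold Fc; ring
          have h3 : 1 - (2*p - 1) * G n ≤ c := by
            rw [hc]
            nlinarith [mul_le_mul_of_nonneg_left hge (by linarith : (0:ℝ) ≤ 2*p-1)]
          have h4 : 0 ≤ 1 - (2*p - 1) * G n := by
            nlinarith [mul_nonneg (by linarith : (0:ℝ) ≤ 1 - (2*p-1)) h0]
          calc 1 - Fc p (G n) = (1 - G n) * (1 - (2*p - 1) * G n) := h2
            _ ≤ ((1 - α) * c ^ n) * c := by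
                apply mul_le_mul hle h3 h4 (mul_nonneg (by linarith) hcn)
            _ = (1 - α) * c ^ (n+1) := by ring
    have hlim : Tendsto (fun n => ENNReal.ofReal ((1 - α) * c ^ n)) atTop (𝓝 0) := by
      have hr : Tendsto (fun n : ℕ => (1 - α) * c ^ n) atTop (𝓝 0) := by
        simpa using (tendsto_pow_atTop_nhds_zero_of_lt_one hc0 hc1).const_mul (1 - α)
      simpa using ENNReal.tendsto_ofReal hr
    refine tendsto_of_tendsto_of_tendsto_of_le_of_le tendsto_const_nhds hlim
      (fun n => zero_le) (fun n => ?_)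
    obtain ⟨h0, h1, hmes⟩ := key n
    rw [hmes]
    exact le_trans (tv_mix_dirac_a a b (G n) h0 h1)
      (ENNReal.ofReal_le_ofReal (bound n).2)
  · -- p < 1/2 : convergence to δ_b
    intro hphalf
    set c : ℝ := 1 - (1 - 2*p) * (1 - α) with hc
    have hc0 : 0 ≤ c := by nlinarith [mul_nonneg (by linarith : (0:ℝ) ≤ 2*p) (by linarith : (0:ℝ) ≤ 1 - α)]
    have hc1 : c < 1 := by nlinarith [mul_pos (by linarith : (0:ℝ) < 1 - 2*p) (by linarith : (0:ℝ) < 1 - α)]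
    have bound : ∀ n, G n ≤ α ∧ G n ≤ α * c ^ n := by
      intro n
      induction n with
      | zero => simp [hG]
      | succ n ih =>
        obtain ⟨hge, hle⟩ := ih
        obtain ⟨h0, h1, -⟩ := key n
        have hGn : G (n+1) = Fc p (G n) := by
          simp [hG, Function.iterate_succ_apply']
        have hcn : (0:ℝ) ≤ c ^ n := pow_nonneg hc0 n
        have h2 : Fc p (G n) = G n * (1 - (1 - 2*p) * (1 - G n)) := by
          unfold Fc; ring
        have h3 : 1 - (1 - 2*p) * (1 - G n) ≤ c := by
          rw [hc]
          nlinarith [mul_le_mul_of_nonneg_left (by linarith : 1 - α ≤ 1 - G n) (by linarith : (0:ℝ) ≤ 1 - 2*p)]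
        have h4 : 0 ≤ 1 - (1 - 2*p) * (1 - G n) := by
          nlinarith [mul_nonneg (by linarith : (0:ℝ) ≤ 2*p) (sub_nonneg.2 h1), mul_nonneg (by linarith : (0:ℝ) ≤ 1-2*p) h0]
        have h5 : Fc p (G n) ≤ α * c ^ (n+1) := by
          calc Fc p (G n) = G n * (1 - (1 - 2*p) * (1 - G n)) := h2
            _ ≤ (α * c ^ n) * c := by
                apply mul_le_mul hle h3 h4 (mul_nonneg (le_of_lt hα0) hcn)
            _ = α * c ^ (n+1) := by ring
        have hpow : c ^ (n+1) ≤ 1 := pow_le_one₀ hc0 hc1.le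
        exact ⟨by rw [hGn]; nlinarith, by rw [hGn]; exact h5⟩
    have hlim : Tendsto (fun n => ENNReal.ofReal (α * c ^ n)) atTop (𝓝 0) := by
      have hr : Tendsto (fun n : ℕ => α * c ^ n) atTop (𝓝 0) := by
        simpa using (tendsto_pow_atTop_nhds_zero_of_lt_one hc0 hc1).const_mul α
      simpa using ENNReal.tendsto_ofReal hr
    refine tendsto_of_tendsto_of_tendsto_of_le_of_le tendsto_const_nhds hlim
      (fun n => zero_le) (fun n => ?_)
    obtain ⟨h0, h1, hmes⟩ := key n
    rw [hmes]
    exact le_trans (tv_mix_dirac_b a b (G n) h0 h1)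
      (ENNReal.ofReal_le_ofReal (bound n).2)
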